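/- Let W ∈ ℝ^{N×N} be a nonnegative matrix, identified with the weighted directed graph on vertex set {1,…,N} having an edge from v to u if and only if W_{u,v} > 0, and let L := diag(W 1_N) − W be its Laplacian. Assume the graph is strongly connected and W is balanced (W 1_N = Wᵀ 1_N). Then λ̄ := λ₂(Lᵀ + L) > 0 (the second-smallest eigenvalue of the symmetric matrix Lᵀ + L), and for every n ≥ 1 and every y ∈ ℝ^{Nn}: ⟨y, (L ⊗ I_n) y⟩ ≥ (λ̄/2) ‖(I_{Nn} − (1/N)(1_N 1_Nᵀ) ⊗ I_n) y‖². -/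

import Mathlib

open Matrix Kronecker

section AuxStmt1
variable {N : ℕ}

lemma aux_bal (W : Matrix (Fin N) (Fin N) ℝ)
    (hbal : W *ᵥ (1 : Fin N → ℝ) = Wᵀ *ᵥ (1 : Fin N → ℝ)) (v : Fin N) :
    ∑ u, W u v = ∑ u, W v u := by
  have := congrFun hbal v
  simp [Matrix.mulVec, dotProduct] at this
  linarith [this]

lemma aux_lhs (W : Matrix (Fin N) (Fin N) ℝ) (x : Fin N → ℝ) :
    x ⬝ᵥ ((Matrix.diagonal (W *ᵥ (1 : Fin N → ℝ)) - W) *ᵥ x) =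
      (∑ u, ∑ v, W u v * x u ^ 2) - ∑ u, ∑ v, W u v * (x u * x v) := by
  simp only [dotProduct, Matrix.mulVec, Matrix.sub_apply,
    Matrix.diagonal_apply, ite_mul, zero_mul, sub_mul, Pi.one_apply, mul_one,
    Finset.sum_sub_distrib, Finset.sum_ite_eq, Finset.mem_univ, if_true]
  rw [← Finset.sum_sub_distrib]
  apply Finset.sum_congr rfl
  intro u _
  rw [mul_sub, Finset.sum_mul, Finset.mul_sum, Finset.mul_sum]
  congr 1
  · exact Finset.sum_congr rfl fun v _ => by ring
  · exact Finset.sum_congr rfl fun v _ => by ring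

lemma aux_quadL (W : Matrix (Fin N) (Fin N) ℝ)
    (hbal : W *ᵥ (1 : Fin N → ℝ) = Wᵀ *ᵥ (1 : Fin N → ℝ)) (x : Fin N → ℝ) :
    2 * (x ⬝ᵥ ((Matrix.diagonal (W *ᵥ (1 : Fin N → ℝ)) - W) *ᵥ x)) =
      ∑ u, ∑ v, W u v * (x u - x v)^2 := by
  have swap : (∑ u, ∑ v, W u v * x v ^ 2) = ∑ u, ∑ v, W u v * x u ^ 2 := by
    rw [Finset.sum_comm]
    calc (∑ v, ∑ u, W u v * x v ^ 2) = ∑ v, (∑ u, W u v) * x v ^ 2 := by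
          simp [Finset.sum_mul]
      _ = ∑ v, (∑ u, W v u) * x v ^ 2 :=
          Finset.sum_congr rfl fun v _ => by rw [aux_bal W hbal v]
      _ = ∑ u, ∑ v, W u v * x u ^ 2 := by simp [Finset.sum_mul]
  have expand : ∀ u : Fin N, (∑ v, W u v * (x u - x v)^2) =
      (∑ v, W u v * x u ^ 2) - 2*(∑ v, W u v * (x u * x v)) + ∑ v, W u v * x v ^ 2 := by
    intro u
    rw [Finset.mul_sum, ← Finset.sum_sub_distrib, ← Finset.sum_add_distrib]
    exact Finset.sum_congr rfl fun v _ => by ring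
  have expand2 : (∑ u, ∑ v, W u v * (x u - x v)^2) =
      (∑ u, ∑ v, W u v * x u ^ 2) - 2*(∑ u, ∑ v, W u v * (x u * x v))
        + ∑ u, ∑ v, W u v * x v ^ 2 := by
    simp only [expand]
    rw [Finset.mul_sum, ← Finset.sum_sub_distrib, ← Finset.sum_add_distrib]
  rw [aux_lhs, expand2, swap]; ring

lemma aux_quadS (W : Matrix (Fin N) (Fin N) ℝ)
    (hbal : W *ᵥ (1 : Fin N → ℝ) = Wᵀ *ᵥ (1 : Fin N → ℝ))
    (L S : Matrix (Fin N) (Fin N) ℝ)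
    (hL : L = Matrix.diagonal (W *ᵥ (1 : Fin N → ℝ)) - W)
    (hS : S = Lᵀ + L) (x : Fin N → ℝ) :
    x ⬝ᵥ (S *ᵥ x) = ∑ u, ∑ v, W u v * (x u - x v)^2 := by
  have htr : x ⬝ᵥ (Lᵀ *ᵥ x) = x ⬝ᵥ (L *ᵥ x) := by
    rw [Matrix.dotProduct_mulVec, Matrix.vecMul_transpose, dotProduct_comm]
  rw [hS, Matrix.add_mulVec, dotProduct_add, htr, ← aux_quadL W hbal x, hL]
  ring

lemma aux_ker (W : Matrix (Fin N) (Fin N) ℝ) (S : Matrix (Fin N) (Fin N) ℝ)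
    (hWnn : ∀ u v, 0 ≤ W u v)
    (hconn : ∀ u v : Fin N, Relation.ReflTransGen (fun a b => 0 < W b a) u v)
    (hquad : ∀ x : Fin N → ℝ, x ⬝ᵥ (S *ᵥ x) = ∑ u, ∑ v, W u v * (x u - x v)^2)
    (z : Fin N → ℝ) (hz : S *ᵥ z = 0) (a b : Fin N) : z a = z b := by
  have h0 : ∑ u, ∑ v, W u v * (z u - z v)^2 = 0 := by
    rw [← hquad, hz]; simp
  have hterm : ∀ u v : Fin N, W u v * (z u - z v)^2 = 0 := by
    intro u v
    have h1 := (Finset.sum_eq_zero_iff_of_nonneg (fun u _ =>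
      Finset.sum_nonneg (fun v _ => mul_nonneg (hWnn u v) (sq_nonneg _)))).mp h0 u
        (Finset.mem_univ u)
    exact (Finset.sum_eq_zero_iff_of_nonneg (fun v _ =>
      mul_nonneg (hWnn u v) (sq_nonneg _))).mp h1 v (Finset.mem_univ v)
  have hedge : ∀ u v : Fin N, 0 < W u v → z u = z v := by
    intro u v h
    rcases mul_eq_zero.mp (hterm u v) with h' | h'
    · exact absurd h' (ne_of_gt h)
    · have := pow_eq_zero_iff (n := 2) (by norm_num) |>.mp h'
      linarith
  induction hconn a b with
  | refl => rfl
  | tail _ h ih => exact ih.trans (hedge _ _ h).symm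

lemma aux_S_one (W : Matrix (Fin N) (Fin N) ℝ)
    (hbal : W *ᵥ (1 : Fin N → ℝ) = Wᵀ *ᵥ (1 : Fin N → ℝ))
    (L S : Matrix (Fin N) (Fin N) ℝ)
    (hL : L = Matrix.diagonal (W *ᵥ (1 : Fin N → ℝ)) - W)
    (hS : S = Lᵀ + L) :
    S *ᵥ (1 : Fin N → ℝ) = 0 := by
  have hLone : L *ᵥ (1 : Fin N → ℝ) = 0 := by
    rw [hL, Matrix.sub_mulVec]
    funext u
    simp [Matrix.mulVec, dotProduct, Matrix.diagonal_apply, Finset.sum_ite_eq]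
  have hLtone : Lᵀ *ᵥ (1 : Fin N → ℝ) = 0 := by
    rw [hL]
    funext u
    have := aux_bal W hbal u
    simp [Matrix.transpose_sub, Matrix.sub_mulVec, Matrix.diagonal_transpose,
      Matrix.mulVec, dotProduct, Matrix.diagonal_apply, Finset.sum_ite_eq,
      Matrix.transpose_apply] at this ⊢
    linarith
  rw [hS, Matrix.add_mulVec, hLone, hLtone]; simp

lemma aux_orth {S : Matrix (Fin N) (Fin N) ℝ} (hherm : S.IsHermitian) (i j : Fin N) :
    ∑ k, (hherm.eigenvectorUnitary : Matrix (Fin N) (Fin N) ℝ) k i *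
         (hherm.eigenvectorUnitary : Matrix (Fin N) (Fin N) ℝ) k j
      = if i = j then 1 else 0 := by
  have h1 : star (hherm.eigenvectorUnitary : Matrix (Fin N) (Fin N) ℝ) *
      (hherm.eigenvectorUnitary : Matrix (Fin N) (Fin N) ℝ) = 1 :=
    Unitary.coe_star_mul_self hherm.eigenvectorUnitary
  have := congrFun (congrFun h1 i) j
  simpa [Matrix.mul_apply, Matrix.star_apply, Matrix.one_apply] using this

lemma aux_eig {S : Matrix (Fin N) (Fin N) ℝ} (hherm : S.IsHermitian) (i : Fin N) :
    S *ᵥ (fun k => (hherm.eigenvectorUnitary : Matrix (Fin N) (Fin N) ℝ) k i)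
      = hherm.eigenvalues i • fun k => (hherm.eigenvectorUnitary : Matrix (Fin N) (Fin N) ℝ) k i := by
  have := hherm.mulVec_eigenvectorBasis i
  convert this using 2 <;> rfl

lemma aux_quad_eigen {S : Matrix (Fin N) (Fin N) ℝ} (hherm : S.IsHermitian) (x : Fin N → ℝ) :
    x ⬝ᵥ (S *ᵥ x) = ∑ i, hherm.eigenvalues i *
      (((hherm.eigenvectorUnitary : Matrix (Fin N) (Fin N) ℝ)ᵀ *ᵥ x) i)^2 := by
  set U : Matrix (Fin N) (Fin N) ℝ := (hherm.eigenvectorUnitary : Matrix (Fin N) (Fin N) ℝ) with hU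
  have hstar : star U = Uᵀ := by
    rw [Matrix.star_eq_conjTranspose, Matrix.conjTranspose_eq_transpose_of_trivial]
  conv_lhs => rw [hherm.spectral_theorem, Unitary.conjStarAlgAut_apply]
  rw [← Matrix.mulVec_mulVec, ← Matrix.mulVec_mulVec, Matrix.dotProduct_mulVec x,
    ← Matrix.mulVec_transpose, hstar]
  have hdiag : (Matrix.diagonal (RCLike.ofReal ∘ hherm.eigenvalues) : Matrix (Fin N) (Fin N) ℝ)
      = Matrix.diagonal hherm.eigenvalues := by congr 1
  rw [hdiag]
  simp only [dotProduct, Matrix.mulVec_diagonal]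
  exact Finset.sum_congr rfl fun i _ => by ring

lemma aux_parseval {S : Matrix (Fin N) (Fin N) ℝ} (hherm : S.IsHermitian) (x : Fin N → ℝ) :
    x ⬝ᵥ x = ∑ i, (((hherm.eigenvectorUnitary : Matrix (Fin N) (Fin N) ℝ)ᵀ *ᵥ x) i)^2 := by
  set U : Matrix (Fin N) (Fin N) ℝ := (hherm.eigenvectorUnitary : Matrix (Fin N) (Fin N) ℝ) with hU
  have hstar : star U = Uᵀ := by
    rw [Matrix.star_eq_conjTranspose, Matrix.conjTranspose_eq_transpose_of_trivial]
  have h2 : U * star U = 1 := (Matrix.mem_unitaryGroup_iff).mp hherm.eigenvectorUnitary.2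
  calc x ⬝ᵥ x = x ⬝ᵥ ((U * star U) *ᵥ x) := by rw [h2, Matrix.one_mulVec]
    _ = (Uᵀ *ᵥ x) ⬝ᵥ (Uᵀ *ᵥ x) := by
        rw [← Matrix.mulVec_mulVec, Matrix.dotProduct_mulVec x, ← Matrix.mulVec_transpose, hstar]
    _ = ∑ i, ((Uᵀ *ᵥ x) i)^2 := by simp [dotProduct, sq]

lemma aux_slice {n : ℕ} (A : Matrix (Fin N) (Fin N) ℝ) (y : Fin N × Fin n → ℝ)
    (u : Fin N) (j : Fin n) :
    ((A ⊗ₖ (1 : Matrix (Fin n) (Fin n) ℝ)) *ᵥ y) (u, j) = (A *ᵥ fun v => y (v, j)) u := by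
  simp [Matrix.mulVec, dotProduct, Fintype.sum_prod_type, Matrix.kroneckerMap_apply,
    Matrix.one_apply, mul_ite, ite_mul, mul_zero, zero_mul, mul_one, Finset.sum_ite_eq,
    Finset.mem_univ, if_true, mul_assoc]

lemma aux_dotsplit {n : ℕ} (a b : Fin N × Fin n → ℝ) :
    a ⬝ᵥ b = ∑ j, ∑ u, a (u, j) * b (u, j) := by
  rw [dotProduct, Fintype.sum_prod_type]
  exact Finset.sum_comm

end AuxStmt1
lemma aux_main (hN : 1 < N) {S : Matrix (Fin N) (Fin N) ℝ} (hherm : S.IsHermitian)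
    (hnn : ∀ x : Fin N → ℝ, 0 ≤ x ⬝ᵥ (S *ᵥ x))
    (hker : ∀ z : Fin N → ℝ, S *ᵥ z = 0 → ∀ a b, z a = z b)
    (hS1 : S *ᵥ (1 : Fin N → ℝ) = 0)
    (lam : ℝ)
    (hlam : lam = hherm.eigenvalues (Tuple.sort hherm.eigenvalues ⟨1, hN⟩)) :
    0 < lam ∧ ∀ x : Fin N → ℝ,
      lam * ((((1 : Matrix (Fin N) (Fin N) ℝ) -
          (N:ℝ)⁻¹ • (Matrix.of fun _ _ => (1:ℝ))) *ᵥ x) ⬝ᵥ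
        (((1 : Matrix (Fin N) (Fin N) ℝ) -
          (N:ℝ)⁻¹ • (Matrix.of fun _ _ => (1:ℝ))) *ᵥ x)) ≤ x ⬝ᵥ (S *ᵥ x) := by
  have hpos0 : 0 < N := by omega
  set μ : Fin N → ℝ := hherm.eigenvalues with hμdef
  set σ : Equiv.Perm (Fin N) := Tuple.sort hherm.eigenvalues with hσdef
  set U : Matrix (Fin N) (Fin N) ℝ := (hherm.eigenvectorUnitary : Matrix (Fin N) (Fin N) ℝ)
    with hUdef
  set i0 : Fin N := σ ⟨0, hpos0⟩ with hi0def
  set i1 : Fin N := σ ⟨1, hN⟩ with hi1def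
  have mono : Monotone (μ ∘ σ) := Tuple.monotone_sort μ
  have hmin : ∀ i, μ i0 ≤ μ i := by
    intro i
    have h := mono (show (⟨0, hpos0⟩ : Fin N) ≤ σ.symm i by simp [Fin.le_def])
    simpa using h
  have hpsd : S.PosSemidef := Matrix.PosSemidef.of_dotProduct_mulVec_nonneg hherm (fun x => by simpa using hnn x)
  have hμnn : ∀ i, 0 ≤ μ i := fun i => hpsd.eigenvalues_nonneg i
  have hone_ne : (1 : Fin N → ℝ) ≠ 0 := by
    intro h
    simpa using congrFun h ⟨0, hpos0⟩
  have hdet : S.det = 0 := by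
    rw [← Matrix.exists_mulVec_eq_zero_iff]
    exact ⟨1, hone_ne, hS1⟩
  have hex : ∃ i, μ i = 0 := by
    have h := hherm.det_eq_prod_eigenvalues
    rw [hdet] at h
    obtain ⟨i, _, hi⟩ := Finset.prod_eq_zero_iff.mp h.symm
    exact ⟨i, by simpa using hi⟩
  have hzero : μ i0 = 0 := by
    obtain ⟨i, hi⟩ := hex
    exact le_antisymm (hi ▸ hmin i) (hμnn i0)
  have hconstcol : ∀ i, μ i = 0 → ∀ a b, U a i = U b i := by
    intro i h a b
    refine hker (fun k => U k i) ?_ a b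
    rw [show (fun k => U k i) = (fun k => (hherm.eigenvectorUnitary : Matrix (Fin N) (Fin N) ℝ) k i) from rfl,
      aux_eig hherm i]
    rw [show hherm.eigenvalues i = μ i from rfl, h, zero_smul]
  have hNne : (N:ℝ) ≠ 0 := Nat.cast_ne_zero.mpr (by omega)
  have hval : ∀ i, μ i = 0 → U ⟨0, hpos0⟩ i ≠ 0 := by
    intro i h hc
    have hu : ∑ k, U k i * U k i = 1 := by
      have := aux_orth hherm i i
      rwa [if_pos rfl] at this
    have h0 : ∑ k, U k i * U k i = 0 := Finset.sum_eq_zero fun k _ => by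
      rw [(hconstcol i h k ⟨0, hpos0⟩).trans hc]; ring
    rw [h0] at hu
    exact zero_ne_one hu
  -- positivity
  have hpos : 0 < lam := by
    by_contra hc
    push_neg at hc
    have hlam0 : μ i1 = 0 := le_antisymm (hlam ▸ hc) (hμnn i1)
    have hne : i0 ≠ i1 := by
      simp only [hi0def, hi1def, ne_eq, EmbeddingLike.apply_eq_iff_eq]
      intro h
      exact absurd (congrArg Fin.val h) (by norm_num)
    have horth : ∑ k, U k i0 * U k i1 = 0 := by
      have := aux_orth hherm i0 i1
      rwa [if_neg hne] at this
    have ha := hval i0 hzero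
    have hb := hval i1 hlam0
    have : ∑ k, U k i0 * U k i1
        = (N : ℝ) * (U ⟨0, hpos0⟩ i0 * U ⟨0, hpos0⟩ i1) := by
      rw [Finset.sum_congr rfl fun k _ => by
        rw [hconstcol i0 hzero k ⟨0, hpos0⟩, hconstcol i1 hlam0 k ⟨0, hpos0⟩]]
      simp [Finset.sum_const, Finset.card_univ, mul_comm]
    rw [this] at horth
    rcases mul_eq_zero.mp horth with h | h
    · exact hNne h
    · rcases mul_eq_zero.mp h with h' | h'
      · exact ha h'
      · exact hb h'
  refine ⟨hpos, fun x => ?_⟩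
  -- the quadratic bound
  set Q : Matrix (Fin N) (Fin N) ℝ :=
    (1 : Matrix (Fin N) (Fin N) ℝ) - (N:ℝ)⁻¹ • (Matrix.of fun _ _ => (1:ℝ)) with hQdef
  set q : Fin N → ℝ := Q *ᵥ x with hqdef
  set c : Fin N → ℝ := Uᵀ *ᵥ x with hcdef
  set d : Fin N → ℝ := Uᵀ *ᵥ q with hddef
  have hqapp : ∀ u, q u = x u - (N:ℝ)⁻¹ * ∑ v, x v := by
    intro u
    simp [hqdef, hQdef, Matrix.sub_mulVec, Matrix.mulVec, dotProduct, Matrix.one_apply,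
      Finset.sum_ite_eq, Finset.mul_sum]
  have hcapp : ∀ i, c i = ∑ k, U k i * x k := by
    intro i; simp [hcdef, Matrix.mulVec, dotProduct, Matrix.transpose_apply]
  have hdapp : ∀ i, d i = ∑ k, U k i * q k := by
    intro i; simp [hddef, Matrix.mulVec, dotProduct, Matrix.transpose_apply]
  have hcolsum : ∀ i, i ≠ i0 → ∑ k, U k i = 0 := by
    intro i hi
    have horth : ∑ k, U k i0 * U k i = 0 := by
      have := aux_orth hherm i0 i
      rwa [if_neg (fun h => hi h.symm)] at this
    have : ∑ k, U k i0 * U k i = U ⟨0, hpos0⟩ i0 * ∑ k, U k i := by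
      rw [Finset.mul_sum]
      exact Finset.sum_congr rfl fun k _ => by rw [hconstcol i0 hzero k ⟨0, hpos0⟩]
    rw [this] at horth
    rcases mul_eq_zero.mp horth with h | h
    · exact absurd h (hval i0 hzero)
    · exact h
  have hdi : ∀ i, i ≠ i0 → d i = c i := by
    intro i hi
    rw [hdapp, hcapp]
    have : ∀ k, U k i * q k = U k i * x k - ((N:ℝ)⁻¹ * ∑ v, x v) * U k i := by
      intro k; rw [hqapp k]; ring
    rw [Finset.sum_congr rfl fun k _ => this k, Finset.sum_sub_distrib,
      ← Finset.mul_sum, hcolsum i hi]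
    ring
  have hdi0 : d i0 = 0 := by
    rw [hdapp]
    have : ∀ k, U k i0 * q k = U ⟨0, hpos0⟩ i0 * (x k - (N:ℝ)⁻¹ * ∑ v, x v) := by
      intro k; rw [hqapp k, hconstcol i0 hzero k ⟨0, hpos0⟩]
    rw [Finset.sum_congr rfl fun k _ => this k, ← Finset.mul_sum]
    have : ∑ k, (x k - (N:ℝ)⁻¹ * ∑ v, x v) = 0 := by
      rw [Finset.sum_sub_distrib, Finset.sum_const, Finset.card_univ]
      simp [nsmul_eq_mul]
      field_simp
      ring
    rw [this, mul_zero]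
  have hlami : ∀ i, i ≠ i0 → lam ≤ μ i := by
    intro i hi
    have hk : σ.symm i ≠ ⟨0, hpos0⟩ := by
      intro h
      apply hi
      rw [← Equiv.apply_symm_apply σ i, h, ← hi0def]
    have hle : (⟨1, hN⟩ : Fin N) ≤ σ.symm i := by
      have : (σ.symm i).val ≠ 0 := fun h => hk (Fin.ext h)
      simp [Fin.le_def]
      omega
    have h := mono hle
    simp only [Function.comp_apply, Equiv.apply_symm_apply] at h
    rw [hlam]
    exact h
  calc lam * (q ⬝ᵥ q) = lam * ∑ i, (d i)^2 := by
        rw [aux_parseval hherm q]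
    _ = ∑ i, lam * (d i)^2 := Finset.mul_sum _ _ _
    _ ≤ ∑ i, μ i * (c i)^2 := by
        apply Finset.sum_le_sum
        intro i _
        by_cases hi : i = i0
        · subst hi
          rw [hdi0, hzero]
          simp
        · rw [hdi i hi]
          exact mul_le_mul_of_nonneg_right (hlami i hi) (sq_nonneg _)
    _ = x ⬝ᵥ (S *ᵥ x) := by
        rw [aux_quad_eigen hherm x]



/-- For a balanced, strongly connected nonnegative weight matrix `W` with Laplacian `L`,
the second-smallest eigenvalue `λ̄` of `Lᵀ + L` is positive, and
`⟨y, (L ⊗ I_n) y⟩ ≥ (λ̄/2) ‖(I − (1/N)(11ᵀ) ⊗ I_n) y‖²` for all `y`. -/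
theorem stmt_1 (N : ℕ) (hN : 1 < N) (W : Matrix (Fin N) (Fin N) ℝ)
    (hWnn : ∀ u v, 0 ≤ W u v)
    (hconn : ∀ u v : Fin N, Relation.ReflTransGen (fun a b => 0 < W b a) u v)
    (hbal : W *ᵥ (1 : Fin N → ℝ) = Wᵀ *ᵥ (1 : Fin N → ℝ))
    (L : Matrix (Fin N) (Fin N) ℝ)
    (hL : L = Matrix.diagonal (W *ᵥ (1 : Fin N → ℝ)) - W)
    (S : Matrix (Fin N) (Fin N) ℝ) (hS : S = Lᵀ + L)
    (hherm : S.IsHermitian)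
    (lam : ℝ)
    (hlam : lam = hherm.eigenvalues (Tuple.sort hherm.eigenvalues ⟨1, hN⟩)) :
    0 < lam ∧
    ∀ n : ℕ, 1 ≤ n → ∀ y : Fin N × Fin n → ℝ,
      (lam / 2) *
        (((1 - ((((N : ℝ)⁻¹ • (Matrix.of fun _ _ => (1 : ℝ)) : Matrix (Fin N) (Fin N) ℝ))
            ⊗ₖ (1 : Matrix (Fin n) (Fin n) ℝ))) *ᵥ y) ⬝ᵥ
         ((1 - ((((N : ℝ)⁻¹ • (Matrix.of fun _ _ => (1 : ℝ)) : Matrix (Fin N) (Fin N) ℝ))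
            ⊗ₖ (1 : Matrix (Fin n) (Fin n) ℝ))) *ᵥ y))
        ≤ y ⬝ᵥ ((L ⊗ₖ (1 : Matrix (Fin n) (Fin n) ℝ)) *ᵥ y) := by
  have hquadS := aux_quadS W hbal L S hL hS
  have hSnn : ∀ x : Fin N → ℝ, 0 ≤ x ⬝ᵥ (S *ᵥ x) := by
    intro x
    rw [hquadS]
    exact Finset.sum_nonneg fun u _ =>
      Finset.sum_nonneg fun v _ => mul_nonneg (hWnn u v) (sq_nonneg _)
  have hker : ∀ z : Fin N → ℝ, S *ᵥ z = 0 → ∀ a b, z a = z b :=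
    fun z hz a b => aux_ker W S hWnn hconn hquadS z hz a b
  have hS1 := aux_S_one W hbal L S hL hS
  obtain ⟨hpos, hineq⟩ := aux_main hN hherm hSnn hker hS1 lam hlam
  refine ⟨hpos, ?_⟩
  intro n hn y
  set B : Matrix (Fin N) (Fin N) ℝ := (N:ℝ)⁻¹ • (Matrix.of fun _ _ => (1:ℝ)) with hBdef
  have hQy : ∀ (u : Fin N) (j : Fin n),
      (((1 : Matrix (Fin N × Fin n) (Fin N × Fin n) ℝ) -
        B ⊗ₖ (1 : Matrix (Fin n) (Fin n) ℝ)) *ᵥ y) (u, j)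
      = ((((1 : Matrix (Fin N) (Fin N) ℝ) - B) *ᵥ fun v => y (v, j)) u) := by
    intro u j
    rw [Matrix.sub_mulVec, Matrix.sub_mulVec, Matrix.one_mulVec, Matrix.one_mulVec]
    simp only [Pi.sub_apply]
    rw [aux_slice B y u j]
  have hLy : ∀ (u : Fin N) (j : Fin n),
      ((L ⊗ₖ (1 : Matrix (Fin n) (Fin n) ℝ)) *ᵥ y) (u, j)
      = ((L *ᵥ fun v => y (v, j)) u) := fun u j => aux_slice L y u j
  have hstep : ∀ j : Fin n, (lam / 2) *
      (((((1 : Matrix (Fin N) (Fin N) ℝ) - B) *ᵥ fun v => y (v, j)) ⬝ᵥ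
        ((((1 : Matrix (Fin N) (Fin N) ℝ) - B) *ᵥ fun v => y (v, j)))))
      ≤ (fun v => y (v, j)) ⬝ᵥ (L *ᵥ fun v => y (v, j)) := by
    intro j
    have h1 := hineq (fun v => y (v, j))
    have h2 : (fun v => y (v, j)) ⬝ᵥ (S *ᵥ fun v => y (v, j))
        = 2 * ((fun v => y (v, j)) ⬝ᵥ (L *ᵥ fun v => y (v, j))) := by
      rw [hquadS, ← aux_quadL W hbal, ← hL]
    rw [h2] at h1
    rw [hBdef] at *
    linarith
  calc (lam / 2) *
      ((((1 : Matrix (Fin N × Fin n) (Fin N × Fin n) ℝ) -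
          B ⊗ₖ (1 : Matrix (Fin n) (Fin n) ℝ)) *ᵥ y) ⬝ᵥ
        (((1 : Matrix (Fin N × Fin n) (Fin N × Fin n) ℝ) -
          B ⊗ₖ (1 : Matrix (Fin n) (Fin n) ℝ)) *ᵥ y))
      = (lam / 2) * ∑ j, ((((1 : Matrix (Fin N) (Fin N) ℝ) - B) *ᵥ fun v => y (v, j)) ⬝ᵥ
          ((((1 : Matrix (Fin N) (Fin N) ℝ) - B) *ᵥ fun v => y (v, j)))) := by
        rw [aux_dotsplit]
        congr 1
        refine Finset.sum_congr rfl fun j _ => ?_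
        rw [dotProduct]
        exact Finset.sum_congr rfl fun u _ => by rw [hQy u j]
    _ = ∑ j, (lam / 2) * ((((1 : Matrix (Fin N) (Fin N) ℝ) - B) *ᵥ fun v => y (v, j)) ⬝ᵥ
          ((((1 : Matrix (Fin N) (Fin N) ℝ) - B) *ᵥ fun v => y (v, j)))) :=
        Finset.mul_sum _ _ _
    _ ≤ ∑ j, (fun v => y (v, j)) ⬝ᵥ (L *ᵥ fun v => y (v, j)) :=
        Finset.sum_le_sum fun j _ => hstep j
    _ = y ⬝ᵥ ((L ⊗ₖ (1 : Matrix (Fin n) (Fin n) ℝ)) *ᵥ y) := by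
        rw [aux_dotsplit y]
        refine Finset.sum_congr rfl fun j _ => ?_
        rw [dotProduct]
        exact Finset.sum_congr rfl fun u _ => by rw [hLy u j]
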